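/- Let S be a bounded nonnegative self-adjoint operator on H, P an orthogonal projection on H, and K a closed subspace with K ⊆ ran(P). Then (P S P)_K ≥ S_K in the Loewner order. -/

import Mathlib

open ContinuousLinearMap

variable {H : Type*} [NormedAddCommGroup H] [InnerProductSpace ℂ H] [CompleteSpace H]

/-- `W` is the Kreĭn shorted operator of `S` with respect to the closed subspace `K`. -/
def IsShortedOp (S W : H →L[ℂ] H) (K : Submodule ℂ H) : Prop :=
  IsSelfAdjoint W ∧
    ∀ f : H, (inner ℂ (W f) f : ℂ).re = ⨅ φ : Kᗮ, (inner ℂ (S (f + φ)) (f + φ) : ℂ).re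
/-- Let `S ≥ 0`, `P` an orthogonal projection (self-adjoint
idempotent), and `K` a closed subspace with `K ⊆ ran P`. Then `(PSP)_K ≥ S_K`. -/
theorem shorted_compress_ge (S : H →L[ℂ] H) (hS : S.IsPositive)
    (P : H →L[ℂ] H) (hPsa : IsSelfAdjoint P) (hPidem : P ∘L P = P)
    (K : Submodule ℂ H) (hK : IsClosed (K : Set H))
    (hKP : (K : Set H) ⊆ Set.range P)
    (W₁ W₂ : H →L[ℂ] H)
    (hW₁ : IsShortedOp (P ∘L S ∘L P) W₁ K) (hW₂ : IsShortedOp S W₂ K) :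
    (W₁ - W₂).IsPositive := by
  obtain ⟨hW₁sa, hW₁f⟩ := hW₁
  obtain ⟨hW₂sa, hW₂f⟩ := hW₂
  have hPadj : ContinuousLinearMap.adjoint P = P :=
    (ContinuousLinearMap.isSelfAdjoint_iff'.mp hPsa)
  have hinner : ∀ x y : H, (inner ℂ (P x) y : ℂ) = inner ℂ x (P y) := by
    intro x y
    conv_lhs => rw [← hPadj]
    exact ContinuousLinearMap.adjoint_inner_left P y x
  have hPK : ∀ k ∈ K, P k = k := by
    intro k hk
    obtain ⟨g, hg⟩ := hKP hk
    rw [← hg, ← ContinuousLinearMap.comp_apply, hPidem]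
  have hbdd : ∀ f : H, BddBelow (Set.range fun ψ : Kᗮ =>
      (inner ℂ (S (f + ψ)) (f + ψ) : ℂ).re) := by
    intro f
    refine ⟨0, ?_⟩
    rintro x ⟨ψ, rfl⟩
    exact hS.2 (f + ψ)
  constructor
  · exact (hW₁sa.sub hW₂sa).isSymmetric
  · intro f
    have key : (⨅ ψ : Kᗮ, (inner ℂ (S (f + ψ)) (f + ψ) : ℂ).re)
        ≤ ⨅ φ : Kᗮ, (inner ℂ ((P ∘L S ∘L P) (f + φ)) (f + φ) : ℂ).re := by
      apply le_ciInf
      intro φ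
      have hψmem : (P f + P (φ : H) - f) ∈ Kᗮ := by
        rw [Submodule.mem_orthogonal]
        intro k hk
        have hφ : (inner ℂ k (φ : H) : ℂ) = 0 :=
          (Submodule.mem_orthogonal K (φ : H)).mp φ.2 k hk
        have h1 : (inner ℂ k (P (f + (φ : H))) : ℂ) = inner ℂ k ((f : H) + φ) := by
          rw [← hinner, hPK k hk]
        have h2 : (inner ℂ k (P f + P (φ : H) - f) : ℂ)
            = inner ℂ k (P (f + (φ : H))) - inner ℂ k f := by
          rw [inner_sub_right, map_add]
        rw [h2, h1, inner_add_right, hφ]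
        ring
      set ψ : Kᗮ := ⟨P f + P (φ : H) - f, hψmem⟩ with hψdef
      have hPsum : (f : H) + (ψ : H) = P (f + (φ : H)) := by
        simp [hψdef, map_add]
      have heq : (inner ℂ ((P ∘L S ∘L P) (f + (φ : H))) (f + (φ : H)) : ℂ)
          = inner ℂ (S (f + (ψ : H))) (f + (ψ : H)) := by
        rw [hPsum]
        simp only [ContinuousLinearMap.comp_apply]
        exact hinner _ _
      calc (⨅ ψ : Kᗮ, (inner ℂ (S (f + ψ)) (f + ψ) : ℂ).re)
          ≤ (inner ℂ (S (f + (ψ : H))) (f + (ψ : H)) : ℂ).re := ciInf_le (hbdd f) ψ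
        _ = (inner ℂ ((P ∘L S ∘L P) (f + φ)) (f + φ) : ℂ).re := by rw [heq]
    have hsub : 0 ≤ (inner ℂ (W₁ f) f : ℂ).re - (inner ℂ (W₂ f) f : ℂ).re := by
      rw [hW₁f f, hW₂f f]
      linarith
    simpa [ContinuousLinearMap.reApplyInnerSelf_apply, sub_apply, inner_sub_left] using hsub
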